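/- arXiv:2603.07809 — 2 statements merged into one kernel-verified Lean document; each statement's English description precedes it below -/
import Mathlib

section
/- Let G be a finite graph whose edge set can be partitioned into cycles, but which admits no partition of its edge set into alternating cycles with respect to the vertical order of its vertices. Then G has a vertex v for which ldeg_G(v) is odd (equivalently, hdeg_G(v) is odd, since ldeg_G(v) + hdeg_G(v) = deg_G(v) is even). -/
/-! Common definitions: vertical (multi)graphs on `Fin n` (vertices ordered by height,
vertex `v` at height `(v : ℕ)`), edges stored as pairs `(lower, upper)`. -/

/-- Number of edges of `E` from `v` to strictly lower vertices
(i.e. edges whose upper endpoint is `v`), with multiplicity. -/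
def ldeg {n : ℕ} (E : Multiset (Fin n × Fin n)) (v : Fin n) : ℕ :=
  (E.filter (fun e => e.2 = v)).card

/-- Number of edges of `E` from `v` to strictly higher vertices
(i.e. edges whose lower endpoint is `v`), with multiplicity. -/
def hdeg {n : ℕ} (E : Multiset (Fin n × Fin n)) (v : Fin n) : ℕ :=
  (E.filter (fun e => e.1 = v)).card

/-- An alternating cycle: a closed walk `w 0, w 1, …, w (2m) = w 0` whose edges
alternately go up and down (odd-indexed vertices are above both cyclic neighbours). -/
structure AltCycle (n : ℕ) where
  m : ℕ
  pos : 0 < m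
  w : ℕ → Fin n
  closed : w (2 * m) = w 0
  up : ∀ j < m, w (2 * j) < w (2 * j + 1)
  down : ∀ j < m, w (2 * j + 2) < w (2 * j + 1)

/-- The up-edges of an alternating cycle (as `(lower, upper)` pairs). -/
def AltCycle.upEdges {n : ℕ} (C : AltCycle n) : Multiset (Fin n × Fin n) :=
  (Multiset.range C.m).map (fun j => (C.w (2 * j), C.w (2 * j + 1)))

/-- The down-edges of an alternating cycle (as `(lower, upper)` pairs). -/
def AltCycle.downEdges {n : ℕ} (C : AltCycle n) : Multiset (Fin n × Fin n) :=
  (Multiset.range C.m).map (fun j => (C.w (2 * j + 2), C.w (2 * j + 1)))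

/-- All edges of an alternating cycle. -/
def AltCycle.edges {n : ℕ} (C : AltCycle n) : Multiset (Fin n × Fin n) :=
  C.upEdges + C.downEdges

/-- The edge multiset `E` can be partitioned into alternating cycles. -/
def AltPartition {n : ℕ} (E : Multiset (Fin n × Fin n)) : Prop :=
  ∃ (k : ℕ) (Cs : Fin k → AltCycle n), E = ∑ i, (Cs i).edges

/-- The undirected edge between `a` and `b`, stored as a `(lower, upper)` pair. -/
def stepEdge {n : ℕ} (a b : Fin n) : Fin n × Fin n := if a < b then (a, b) else (b, a)

/-- `E` contains a (vertex-simple) cycle: a closed walk with pairwise distinct vertices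
whose (undirected) edge multiset is contained in `E`. -/
def HasCycle {n : ℕ} (E : Multiset (Fin n × Fin n)) : Prop :=
  ∃ (len : ℕ) (w : ℕ → Fin n), 0 < len ∧ w len = w 0 ∧
    (∀ i < len, ∀ j < len, w i = w j → i = j) ∧
    ((Multiset.range len).map (fun j => stepEdge (w j) (w (j + 1)))) ≤ E

/-- Reachability (connectivity) in the multigraph with edge multiset `E`. -/
def Reach {n : ℕ} (E : Multiset (Fin n × Fin n)) (a b : Fin n) : Prop :=
  Relation.ReflTransGen (fun x y => (x, y) ∈ E ∨ (y, x) ∈ E) a b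

/-- The connected component of `v` in `E` is a single vertex or a path along
vertices of strictly increasing height. -/
def IncPathComp {n : ℕ} (E : Multiset (Fin n × Fin n)) (v : Fin n) : Prop :=
  ∃ (m : ℕ) (p : Fin (m + 1) → Fin n), StrictMono p ∧
    (∀ u, Reach E v u ↔ ∃ i, p i = u) ∧
    (∀ i : Fin m, (p i.castSucc, p i.succ) ∈ E)

/-- The edges present at stage `j` of the upward lower-star filtration:
those whose upper endpoint has height at most `j`. -/
def levelEdges {n : ℕ} (E : Multiset (Fin n × Fin n)) (j : ℕ) : Multiset (Fin n × Fin n) :=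
  E.filter (fun e => (e.2 : ℕ) ≤ j)

/-- Death time (elder rule) of the 0-dimensional class created by vertex `v` in the
upward lower-star filtration: the first height at which `v` gets connected to a
strictly lower (older) vertex, or `∞` if this never happens. -/
noncomputable def death0 {n : ℕ} (E : Multiset (Fin n × Fin n)) (v : Fin n) : ℕ∞ :=
  sInf ((fun j : ℕ => (j : ℕ∞)) '' {j : ℕ | ∃ u, u < v ∧ Reach (levelEdges E j) u v})

/-- The 0-dimensional verbose persistence diagram in the up direction: one point
per vertex, born at the height of the vertex. -/
noncomputable def diag0 {n : ℕ} (E : Multiset (Fin n × Fin n)) : Multiset (ℕ × ℕ∞) :=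
  (Finset.univ.val : Multiset (Fin n)).map (fun v : Fin n => ((v : ℕ), death0 E v))

/-- Number of edges entering at height `j` (upper endpoint of height `j`). -/
def edgesAt {n : ℕ} (E : Multiset (Fin n × Fin n)) (j : ℕ) : ℕ :=
  (E.filter (fun e => (e.2 : ℕ) = j)).card

/-- Number of 0-dimensional points dying at height `j` in the verbose diagram. -/
noncomputable def deaths0At {n : ℕ} (E : Multiset (Fin n × Fin n)) (j : ℕ) : ℕ :=
  Nat.card {v : Fin n // death0 E v = (j : ℕ∞)}

/-- Number of 1-dimensional classes born at height `j`: edges entering at height `j`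
that are creators rather than destructors. -/
noncomputable def cyclesBornAt {n : ℕ} (E : Multiset (Fin n × Fin n)) (j : ℕ) : ℕ :=
  edgesAt E j - deaths0At E j

/-- The graph with the vertical order reversed (for the down direction). -/
def flipE {n : ℕ} (E : Multiset (Fin n × Fin n)) : Multiset (Fin n × Fin n) :=
  E.map (fun e => (e.2.rev, e.1.rev))

/-- Equality of the verbose persistence diagrams in the up direction. -/
def UpDiagEq {n : ℕ} (E1 E2 : Multiset (Fin n × Fin n)) : Prop :=
  diag0 E1 = diag0 E2 ∧ ∀ j, cyclesBornAt E1 j = cyclesBornAt E2 j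

/-- Equality of VPHTs for vertical graphs: the verbose diagrams agree in both the
up and the down direction. -/
def VPHTEq {n : ℕ} (E1 E2 : Multiset (Fin n × Fin n)) : Prop :=
  UpDiagEq E1 E2 ∧ UpDiagEq (flipE E1) (flipE E2)

/-- Number of connected components of the multigraph with edge multiset `E`. -/
noncomputable def numComponents {n : ℕ} (E : Multiset (Fin n × Fin n)) : ℕ :=
  Nat.card (Quot (Reach E))

/-- The edge multiset `E` can be partitioned into cycles (closed trails). -/
def CircuitPartition {n : ℕ} (E : Multiset (Fin n × Fin n)) : Prop :=
  ∃ (k : ℕ) (len : Fin k → ℕ) (w : Fin k → ℕ → Fin n),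
    (∀ i, 0 < len i) ∧ (∀ i, w i (len i) = w i 0) ∧
    (∀ i, ∀ j < len i, w i j ≠ w i (j + 1)) ∧
    (∑ i, (Multiset.range (len i)).map (fun j => stepEdge (w i j) (w i (j + 1)))) = E
private lemma cons_le_of_mem {α} [DecidableEq α] {e : α} {s E : Multiset α}
    (he : e ∈ E) (hs : s ≤ E - {e}) : e ::ₘ s ≤ E := by
  rw [← Multiset.cons_erase he]
  exact Multiset.cons_le_cons _ (by rwa [Multiset.sub_singleton] at hs)

private lemma range_succ' (m : ℕ) :
    Multiset.range (m + 1) = 0 ::ₘ (Multiset.range m).map (fun j => j + 1) := by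
  have := @List.range_succ_eq_map m
  simpa [Multiset.range] using congrArg (fun l : List ℕ => (l : Multiset ℕ)) this

private lemma map_range_succ {α : Type*} (f : ℕ → α) (m : ℕ) :
    (Multiset.range (m+1)).map f = f 0 ::ₘ (Multiset.range m).map (fun j => f (j+1)) := by
  rw [range_succ', Multiset.map_cons, Multiset.map_map]
  rfl

private lemma countP_range_shift (p : ℕ → Prop) [DecidablePred p] (m : ℕ) (h : p 0 ↔ p m) :
    Multiset.countP p (Multiset.range m) = Multiset.countP (fun j => p (j+1)) (Multiset.range m) := by
  have A : Multiset.countP p (Multiset.range (m+1))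
      = Multiset.countP p (Multiset.range m) + (if p m then 1 else 0) := by
    rw [Multiset.range_succ, Multiset.countP_cons]
  have B : Multiset.countP p (Multiset.range (m+1))
      = Multiset.countP (fun j => p (j+1)) (Multiset.range m) + (if p 0 then 1 else 0) := by
    rw [range_succ', Multiset.countP_cons]
    congr 1
    rw [Multiset.countP_map, Multiset.countP_eq_card_filter]
  have key : (if p m then 1 else 0 : ℕ) = if p 0 then 1 else 0 := by
    by_cases h0 : p 0
    · rw [if_pos h0, if_pos (h.mp h0)]
    · rw [if_neg h0, if_neg (fun hm => h0 (h.mpr hm))]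
  omega

private lemma ldeg_add {n} (s t : Multiset (Fin n × Fin n)) (v : Fin n) :
    ldeg (s + t) v = ldeg s v + ldeg t v := by
  simp [ldeg, Multiset.filter_add]
private lemma hdeg_add {n} (s t : Multiset (Fin n × Fin n)) (v : Fin n) :
    hdeg (s + t) v = hdeg s v + hdeg t v := by
  simp [hdeg, Multiset.filter_add]

private lemma ldeg_le {n} {s E : Multiset (Fin n × Fin n)} (h : s ≤ E) (v : Fin n) :
    ldeg s v ≤ ldeg E v :=
  Multiset.card_le_card (Multiset.filter_le_filter _ h)
private lemma hdeg_le {n} {s E : Multiset (Fin n × Fin n)} (h : s ≤ E) (v : Fin n) :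
    hdeg s v ≤ hdeg E v :=
  Multiset.card_le_card (Multiset.filter_le_filter _ h)

private lemma ldeg_sub {n} {s E : Multiset (Fin n × Fin n)} (h : s ≤ E) (v : Fin n) :
    ldeg (E - s) v = ldeg E v - ldeg s v := by
  rw [ldeg, Multiset.filter_sub, Multiset.card_sub (Multiset.filter_le_filter _ h)]; rfl
private lemma hdeg_sub {n} {s E : Multiset (Fin n × Fin n)} (h : s ≤ E) (v : Fin n) :
    hdeg (E - s) v = hdeg E v - hdeg s v := by
  rw [hdeg, Multiset.filter_sub, Multiset.card_sub (Multiset.filter_le_filter _ h)]; rfl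

private lemma ldeg_singleton {n} (e : Fin n × Fin n) (v : Fin n) :
    ldeg {e} v = if e.2 = v then 1 else 0 := by
  simp [ldeg, Multiset.filter_singleton, apply_ite]
private lemma hdeg_singleton {n} (e : Fin n × Fin n) (v : Fin n) :
    hdeg {e} v = if e.1 = v then 1 else 0 := by
  simp [hdeg, Multiset.filter_singleton, apply_ite]

private lemma exists_upper {n} {E : Multiset (Fin n × Fin n)} {v : Fin n}
    (h : ldeg E v ≠ 0) : ∃ e ∈ E, e.2 = v := by
  have : E.filter (fun e => e.2 = v) ≠ 0 := by
    intro h0; apply h; rw [ldeg, h0]; rfl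
  obtain ⟨e, he⟩ := Multiset.exists_mem_of_ne_zero this
  rw [Multiset.mem_filter] at he
  exact ⟨e, he.1, he.2⟩
private lemma exists_lower {n} {E : Multiset (Fin n × Fin n)} {v : Fin n}
    (h : hdeg E v ≠ 0) : ∃ e ∈ E, e.1 = v := by
  have : E.filter (fun e => e.1 = v) ≠ 0 := by
    intro h0; apply h; rw [hdeg, h0]; rfl
  obtain ⟨e, he⟩ := Multiset.exists_mem_of_ne_zero this
  rw [Multiset.mem_filter] at he
  exact ⟨e, he.1, he.2⟩

private lemma countP_eq_sum' {α : Type*} (p : α → Prop) [DecidablePred p] (s : Multiset α) :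
    Multiset.countP p s = (s.map (fun a => if p a then 1 else 0)).sum := by
  induction s using Multiset.induction with
  | empty => simp
  | cons a s ih => rw [Multiset.countP_cons, Multiset.map_cons, Multiset.sum_cons, ih]; omega

private lemma splice {n : ℕ} {E : Multiset (Fin n × Fin n)} {e1 e2 : Fin n × Fin n}
    {v p c A : Fin n} (he1 : e1 ∈ E) (he2 : e2 ∈ E - {e1})
    (he1e : e1 = (v, p)) (he2e : e2 = (c, p)) (hvp : v < p) (hcp : c < p)
    (m' : ℕ) (w' : ℕ → Fin n) (hw0 : w' 0 = c) (hwA : w' (2*m') = A)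
    (hup : ∀ j < m', w' (2*j) < w' (2*j+1)) (hdn : ∀ j < m', w' (2*j+2) < w' (2*j+1))
    (hle : ((Multiset.range m').map (fun j => (w' (2*j), w' (2*j+1)))
        + (Multiset.range m').map (fun j => (w' (2*j+2), w' (2*j+1)))) ≤ E - {e1} - {e2}) :
    ∃ (m : ℕ) (w : ℕ → Fin n), 0 < m ∧ w 0 = v ∧ w (2*m) = A ∧
      (∀ j < m, w (2*j) < w (2*j+1)) ∧ (∀ j < m, w (2*j+2) < w (2*j+1)) ∧
      ((Multiset.range m).map (fun j => (w (2*j), w (2*j+1)))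
        + (Multiset.range m).map (fun j => (w (2*j+2), w (2*j+1)))) ≤ E := by
  set w : ℕ → Fin n := fun j => if j = 0 then v else if j = 1 then p else w' (j - 2) with hw
  have w0 : w 0 = v := rfl
  have w1 : w 1 = p := rfl
  have wsh : ∀ j, w (j + 2) = w' j := by
    intro j
    show (if j + 2 = 0 then v else if j + 2 = 1 then p else w' (j + 2 - 2)) = w' j
    rw [if_neg (by omega), if_neg (by omega), Nat.add_sub_cancel]
  refine ⟨m' + 1, w, Nat.succ_pos _, w0, ?_, ?_, ?_, ?_⟩
  · -- closed
    have : 2 * (m' + 1) = 2 * m' + 2 := by ring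
    rw [this, wsh, hwA]
  · -- up
    intro j hj
    rcases j with _ | j'
    · simpa [w0, w1] using hvp
    · have h1 : 2 * (j' + 1) = 2 * j' + 2 := by ring
      have h2 : 2 * (j' + 1) + 1 = (2 * j' + 1) + 2 := by ring
      rw [h2, h1, wsh, wsh]
      exact hup j' (by omega)
  · -- down
    intro j hj
    rcases j with _ | j'
    · have h0 : (2 : ℕ) * 0 + 2 = 0 + 2 := by ring
      rw [h0, wsh, hw0]
      simpa [w1] using hcp
    · have h1 : 2 * (j' + 1) + 2 = (2 * j' + 2) + 2 := by ring
      have h2 : 2 * (j' + 1) + 1 = (2 * j' + 1) + 2 := by ring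
      rw [h2, h1, wsh, wsh]
      exact hdn j' (by omega)
  · -- edges
    have hupE : (Multiset.range (m'+1)).map (fun j => (w (2*j), w (2*j+1)))
        = e1 ::ₘ (Multiset.range m').map (fun j => (w' (2*j), w' (2*j+1))) := by
      rw [map_range_succ]
      refine congrArg₂ Multiset.cons ?_ ?_
      · simp [w0, w1, he1e]
      · apply Multiset.map_congr rfl
        intro j _
        show (w (2*(j+1)), w (2*(j+1)+1)) = _
        have h1 : 2 * (j + 1) = 2 * j + 2 := by ring
        have h2 : 2 * (j + 1) + 1 = (2 * j + 1) + 2 := by ring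
        rw [h2, h1, wsh, wsh]
    have hdnE : (Multiset.range (m'+1)).map (fun j => (w (2*j+2), w (2*j+1)))
        = e2 ::ₘ (Multiset.range m').map (fun j => (w' (2*j+2), w' (2*j+1))) := by
      rw [map_range_succ]
      refine congrArg₂ Multiset.cons ?_ ?_
      · show (w (2 * 0 + 2), w (2 * 0 + 1)) = e2
        have h0 : (2 : ℕ) * 0 + 2 = 0 + 2 := by ring
        rw [h0, wsh, hw0]
        show (c, w 1) = e2
        rw [w1, he2e]
      · apply Multiset.map_congr rfl
        intro j _
        show (w (2*(j+1)+2), w (2*(j+1)+1)) = _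
        have h1 : 2 * (j + 1) + 2 = (2 * j + 2) + 2 := by ring
        have h2 : 2 * (j + 1) + 1 = (2 * j + 1) + 2 := by ring
        rw [h2, h1, wsh, wsh]
    rw [hupE, hdnE]
    have : e1 ::ₘ (Multiset.range m').map (fun j => (w' (2*j), w' (2*j+1)))
        + e2 ::ₘ (Multiset.range m').map (fun j => (w' (2*j+2), w' (2*j+1)))
        = e1 ::ₘ e2 ::ₘ ((Multiset.range m').map (fun j => (w' (2*j), w' (2*j+1)))
          + (Multiset.range m').map (fun j => (w' (2*j+2), w' (2*j+1)))) := by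
      simp only [Multiset.cons_add, Multiset.add_cons]
      exact Multiset.cons_swap _ _ _
    rw [this]
    exact cons_le_of_mem he1 (cons_le_of_mem he2 hle)


private lemma stepEdge_deg {n : ℕ} (a b v : Fin n) :
    ((if (stepEdge a b).2 = v then 1 else 0) + (if (stepEdge a b).1 = v then 1 else 0) : ℕ)
    = (if a = v then 1 else 0) + (if b = v then 1 else 0) := by
  unfold stepEdge
  split_ifs <;> simp_all

private lemma trail_exists {n : ℕ} : ∀ N : ℕ, ∀ E : Multiset (Fin n × Fin n),
    Multiset.card E ≤ N →
    (∀ e ∈ E, e.1 < e.2) →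
    ∀ a v : Fin n, a ≠ v →
    (∀ u, Even (ldeg E u)) →
    (∀ u, Odd (hdeg E u) ↔ (u = a ∨ u = v)) →
    ∃ (m : ℕ) (w : ℕ → Fin n), 0 < m ∧ w 0 = v ∧ w (2*m) = a ∧
      (∀ j < m, w (2*j) < w (2*j+1)) ∧ (∀ j < m, w (2*j+2) < w (2*j+1)) ∧
      ((Multiset.range m).map (fun j => (w (2*j), w (2*j+1)))
        + (Multiset.range m).map (fun j => (w (2*j+2), w (2*j+1)))) ≤ E := by
  intro N
  induction N with
  | zero =>
      intro E hc hE a v hav hl hh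
      exfalso
      have hE0 : E = 0 := by
        rw [← Multiset.card_eq_zero]
        omega
      have hodd := (hh v).mpr (Or.inr rfl)
      rw [hE0] at hodd
      simp [hdeg] at hodd
  | succ N ih =>
      intro E hc hE a v hav hl hh
      have hoddv : Odd (hdeg E v) := (hh v).mpr (Or.inr rfl)
      have hne : hdeg E v ≠ 0 := by rcases hoddv with ⟨t, ht⟩; omega
      obtain ⟨e1, he1, he11⟩ := exists_lower hne
      have hvp : v < e1.2 := by have := hE e1 he1; rwa [he11] at this
      have he1e : e1 = (v, e1.2) := by rw [← he11]
      have h1le : ({e1} : Multiset _) ≤ E := Multiset.singleton_le.mpr he1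
      have hone : 1 ≤ ldeg E e1.2 := by
        have := ldeg_le h1le e1.2
        rwa [ldeg_singleton, if_pos rfl] at this
      have hl1p : Odd (ldeg (E - {e1}) e1.2) := by
        rw [ldeg_sub h1le, ldeg_singleton, if_pos rfl]
        exact Nat.Even.sub_odd hone (hl e1.2) odd_one
      have hl1pne : ldeg (E - {e1}) e1.2 ≠ 0 := by rcases hl1p with ⟨t, ht⟩; omega
      obtain ⟨e2, he2, he22⟩ := exists_upper hl1pne
      have he2e : e2 = (e2.1, e1.2) := by rw [← he22]
      have hE1le : E - {e1} ≤ E := tsub_le_self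
      have hcp : e2.1 < e1.2 := by
        have := hE e2 (Multiset.mem_of_le hE1le he2)
        rwa [he22] at this
      by_cases hca : e2.1 = a
      · exact splice he1 he2 he1e he2e hvp hcp 0 (fun _ => a) hca.symm rfl
          (fun j hj => absurd hj (Nat.not_lt_zero j))
          (fun j hj => absurd hj (Nat.not_lt_zero j)) (by simp)
      · have h2le : ({e2} : Multiset _) ≤ E - {e1} := Multiset.singleton_le.mpr he2
        have hE2le : E - {e1} - {e2} ≤ E - {e1} := tsub_le_self
        have hcard : Multiset.card (E - {e1} - {e2}) ≤ N := by
          have c1 : Multiset.card (E - {e1}) = Multiset.card E - 1 := by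
            rw [Multiset.card_sub h1le]; simp
          have c2 : Multiset.card (E - {e1} - {e2}) = Multiset.card (E - {e1}) - 1 := by
            rw [Multiset.card_sub h2le]; simp
          have hp1 : 0 < Multiset.card (E - {e1}) := Multiset.card_pos.mpr
            (fun h => by rw [h] at he2; simp at he2)
          omega
        have hl2 : ∀ u, Even (ldeg (E - {e1} - {e2}) u) := by
          intro u
          have s1 : ldeg (E - {e1}) u = ldeg E u - ldeg {e1} u := ldeg_sub h1le u
          have s2 : ldeg (E - {e1} - {e2}) u = ldeg (E - {e1}) u - ldeg {e2} u :=
            ldeg_sub h2le u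
          by_cases hup : e1.2 = u
          · rw [s2, ldeg_singleton, if_pos (he22.trans hup)]
            rw [← hup]
            exact Nat.Odd.sub_odd hl1p odd_one
          · rw [s2, ldeg_singleton, if_neg (fun h => hup (he22.symm.trans h)),
              Nat.sub_zero, s1, ldeg_singleton, if_neg hup, Nat.sub_zero]
            exact hl u
        have hh2 : ∀ u, Odd (hdeg (E - {e1} - {e2}) u) ↔ (u = a ∨ u = e2.1) := by
          intro u
          have s1 : hdeg (E - {e1}) u = hdeg E u - hdeg {e1} u := hdeg_sub h1le u
          have s2 : hdeg (E - {e1} - {e2}) u = hdeg (E - {e1}) u - hdeg {e2} u :=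
            hdeg_sub h2le u
          have g1 : hdeg ({e1} : Multiset _) u = if v = u then 1 else 0 := by
            rw [hdeg_singleton, he11]
          have g2 : hdeg ({e2} : Multiset _) u = if e2.1 = u then 1 else 0 :=
            hdeg_singleton e2 u
          have mono2 : hdeg ({e2} : Multiset _) u ≤ hdeg (E - {e1}) u := hdeg_le h2le u
          by_cases huv : v = u <;> by_cases huc : e2.1 = u
          · -- u = v and u = e2.1
            have hou : Odd (hdeg E u) := (hh u).mpr (Or.inr huv.symm)
            have e1odd : Even (hdeg (E - {e1}) u) := by
              rw [s1, g1, if_pos huv]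
              exact Nat.Odd.sub_odd hou odd_one
            have h1le' : 1 ≤ hdeg (E - {e1}) u := by
              rw [g2, if_pos huc] at mono2; exact mono2
            rw [s2, g2, if_pos huc]
            exact iff_of_true (Nat.Even.sub_odd h1le' e1odd odd_one) (Or.inr huc.symm)
          · -- u = v, u ≠ e2.1
            have hou : Odd (hdeg E u) := (hh u).mpr (Or.inr huv.symm)
            rw [s2, g2, if_neg huc, Nat.sub_zero, s1, g1, if_pos huv]
            refine iff_of_false (fun h => ?_) (fun h => ?_)
            · exact (Nat.not_even_iff_odd.mpr h) (Nat.Odd.sub_odd hou odd_one)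
            · rcases h with h | h
              · exact hav (huv.trans h).symm
              · exact huc h.symm
          · -- u = e2.1, u ≠ v
            have heu : Even (hdeg E u) := by
              rw [← Nat.not_odd_iff_even, hh u]
              rintro (h | h)
              · exact hca (huc.trans h)
              · exact huv h.symm
            have h1le' : 1 ≤ hdeg (E - {e1}) u := by
              rw [g2, if_pos huc] at mono2; exact mono2
            have e1even : Even (hdeg (E - {e1}) u) := by
              rw [s1, g1, if_neg huv, Nat.sub_zero]; exact heu
            rw [s2, g2, if_pos huc]
            exact iff_of_true (Nat.Even.sub_odd h1le' e1even odd_one) (Or.inr huc.symm)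
          · -- u ≠ v, u ≠ e2.1
            rw [s2, g2, if_neg huc, Nat.sub_zero, s1, g1, if_neg huv, Nat.sub_zero, hh u]
            constructor
            · rintro (h | h)
              · exact Or.inl h
              · exact absurd h.symm huv
            · rintro (h | h)
              · exact Or.inl h
              · exact absurd h.symm huc
        obtain ⟨m', w', hm', hw0, hwA, hup, hdn, hle⟩ :=
          ih (E - {e1} - {e2}) hcard
            (fun e he => hE e (Multiset.mem_of_le (hE2le.trans hE1le) he))
            a e2.1 (fun h => hca h.symm) hl2 hh2
        exact splice he1 he2 he1e he2e hvp hcp m' w' hw0 hwA hup hdn hle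

private lemma exists_altCycle {n : ℕ} (E : Multiset (Fin n × Fin n)) (h0 : E ≠ 0)
    (hE : ∀ e ∈ E, e.1 < e.2) (hl : ∀ u, Even (ldeg E u)) (hh : ∀ u, Even (hdeg E u)) :
    ∃ C : AltCycle n, C.edges ≤ E := by
  obtain ⟨e1, he1⟩ := Multiset.exists_mem_of_ne_zero h0
  have hab : e1.1 < e1.2 := hE e1 he1
  have he1e : e1 = (e1.1, e1.2) := rfl
  have h1le : ({e1} : Multiset _) ≤ E := Multiset.singleton_le.mpr he1
  have hone : 1 ≤ ldeg E e1.2 := by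
    have := ldeg_le h1le e1.2
    rwa [ldeg_singleton, if_pos rfl] at this
  have hl1b : Odd (ldeg (E - {e1}) e1.2) := by
    rw [ldeg_sub h1le, ldeg_singleton, if_pos rfl]
    exact Nat.Even.sub_odd hone (hl e1.2) odd_one
  have hlne : ldeg (E - {e1}) e1.2 ≠ 0 := by rcases hl1b with ⟨t, ht⟩; omega
  obtain ⟨e2, he2, he22⟩ := exists_upper hlne
  have he2e : e2 = (e2.1, e1.2) := by rw [← he22]
  have hE1le : E - {e1} ≤ E := tsub_le_self
  have hcb : e2.1 < e1.2 := by
    have := hE e2 (Multiset.mem_of_le hE1le he2)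
    rwa [he22] at this
  have trail : ∃ (m : ℕ) (w : ℕ → Fin n), 0 < m ∧ w 0 = e1.1 ∧ w (2*m) = e1.1 ∧
      (∀ j < m, w (2*j) < w (2*j+1)) ∧ (∀ j < m, w (2*j+2) < w (2*j+1)) ∧
      ((Multiset.range m).map (fun j => (w (2*j), w (2*j+1)))
        + (Multiset.range m).map (fun j => (w (2*j+2), w (2*j+1)))) ≤ E := by
    by_cases hca : e2.1 = e1.1
    · exact splice he1 he2 he1e he2e hab hcb 0 (fun _ => e1.1) hca.symm rfl
        (fun j hj => absurd hj (Nat.not_lt_zero j))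
        (fun j hj => absurd hj (Nat.not_lt_zero j)) (by simp)
    · have h2le : ({e2} : Multiset _) ≤ E - {e1} := Multiset.singleton_le.mpr he2
      have hE2le : E - {e1} - {e2} ≤ E - {e1} := tsub_le_self
      have hl2 : ∀ u, Even (ldeg (E - {e1} - {e2}) u) := by
        intro u
        have s1 : ldeg (E - {e1}) u = ldeg E u - ldeg {e1} u := ldeg_sub h1le u
        have s2 : ldeg (E - {e1} - {e2}) u = ldeg (E - {e1}) u - ldeg {e2} u :=
          ldeg_sub h2le u
        by_cases hup : e1.2 = u
        · rw [s2, ldeg_singleton, if_pos (he22.trans hup)]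
          rw [← hup]
          exact Nat.Odd.sub_odd hl1b odd_one
        · rw [s2, ldeg_singleton, if_neg (fun h => hup (he22.symm.trans h)),
            Nat.sub_zero, s1, ldeg_singleton, if_neg hup, Nat.sub_zero]
          exact hl u
      have hh2 : ∀ u, Odd (hdeg (E - {e1} - {e2}) u) ↔ (u = e1.1 ∨ u = e2.1) := by
        intro u
        have s1 : hdeg (E - {e1}) u = hdeg E u - hdeg {e1} u := hdeg_sub h1le u
        have s2 : hdeg (E - {e1} - {e2}) u = hdeg (E - {e1}) u - hdeg {e2} u :=
          hdeg_sub h2le u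
        have g1 : hdeg ({e1} : Multiset _) u = if e1.1 = u then 1 else 0 :=
          hdeg_singleton e1 u
        have g2 : hdeg ({e2} : Multiset _) u = if e2.1 = u then 1 else 0 :=
          hdeg_singleton e2 u
        have mono1 : hdeg ({e1} : Multiset _) u ≤ hdeg E u := hdeg_le h1le u
        have mono2 : hdeg ({e2} : Multiset _) u ≤ hdeg (E - {e1}) u := hdeg_le h2le u
        by_cases hua : e1.1 = u <;> by_cases huc : e2.1 = u
        · exact absurd (huc.trans hua.symm) hca
        · -- u = e1.1 only
          have h1le' : 1 ≤ hdeg E u := by rw [g1, if_pos hua] at mono1; exact mono1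
          rw [s2, g2, if_neg huc, Nat.sub_zero, s1, g1, if_pos hua]
          exact iff_of_true (Nat.Even.sub_odd h1le' (hh u) odd_one) (Or.inl hua.symm)
        · -- u = e2.1 only
          have e1even : Even (hdeg (E - {e1}) u) := by
            rw [s1, g1, if_neg hua, Nat.sub_zero]; exact hh u
          have h1le' : 1 ≤ hdeg (E - {e1}) u := by
            rw [g2, if_pos huc] at mono2; exact mono2
          rw [s2, g2, if_pos huc]
          exact iff_of_true (Nat.Even.sub_odd h1le' e1even odd_one) (Or.inr huc.symm)
        · -- neither
          rw [s2, g2, if_neg huc, Nat.sub_zero, s1, g1, if_neg hua, Nat.sub_zero]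
          refine iff_of_false (Nat.not_odd_iff_even.mpr (hh u)) ?_
          rintro (h | h)
          · exact hua h.symm
          · exact huc h.symm
      obtain ⟨m', w', hm', hw0, hwA, hup, hdn, hle⟩ :=
        trail_exists (Multiset.card (E - {e1} - {e2})) (E - {e1} - {e2}) le_rfl
          (fun e he => hE e (Multiset.mem_of_le (hE2le.trans hE1le) he))
          e1.1 e2.1 (fun h => hca h.symm) hl2 hh2
      exact splice he1 he2 he1e he2e hab hcb m' w' hw0 hwA hup hdn hle
  obtain ⟨m, w, hm, hw0, hwA, hup, hdn, hle⟩ := trail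
  exact ⟨⟨m, hm, w, hwA.trans hw0.symm, hup, hdn⟩, hle⟩

private lemma cycle_ldeg_even {n : ℕ} (C : AltCycle n) (u : Fin n) :
    Even (ldeg C.edges u) := by
  have h1 : ldeg C.upEdges u
      = Multiset.countP (fun j => C.w (2*j+1) = u) (Multiset.range C.m) := by
    rw [AltCycle.upEdges, ldeg, ← Multiset.countP_eq_card_filter, Multiset.countP_map,
      Multiset.countP_eq_card_filter]
  have h2 : ldeg C.downEdges u
      = Multiset.countP (fun j => C.w (2*j+1) = u) (Multiset.range C.m) := by
    rw [AltCycle.downEdges, ldeg, ← Multiset.countP_eq_card_filter, Multiset.countP_map,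
      Multiset.countP_eq_card_filter]
  rw [AltCycle.edges, ldeg_add, h1, h2]
  exact ⟨_, rfl⟩

private lemma cycle_hdeg_even {n : ℕ} (C : AltCycle n) (u : Fin n) :
    Even (hdeg C.edges u) := by
  have h1 : hdeg C.upEdges u
      = Multiset.countP (fun j => C.w (2*j) = u) (Multiset.range C.m) := by
    rw [AltCycle.upEdges, hdeg, ← Multiset.countP_eq_card_filter, Multiset.countP_map,
      Multiset.countP_eq_card_filter]
  have h2 : hdeg C.downEdges u
      = Multiset.countP (fun j => C.w (2*j+2) = u) (Multiset.range C.m) := by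
    rw [AltCycle.downEdges, hdeg, ← Multiset.countP_eq_card_filter, Multiset.countP_map,
      Multiset.countP_eq_card_filter]
  have hsh := countP_range_shift (fun j => C.w (2*j) = u) C.m
    (by show C.w (2*0) = u ↔ C.w (2*C.m) = u; rw [C.closed])
  rw [AltCycle.edges, hdeg_add, h1, h2, hsh]
  exact ⟨_, rfl⟩

private def ldegHom {n : ℕ} (v : Fin n) : Multiset (Fin n × Fin n) →+ ℕ where
  toFun s := ldeg s v
  map_zero' := rfl
  map_add' s t := ldeg_add s t v

private def hdegHom {n : ℕ} (v : Fin n) : Multiset (Fin n × Fin n) →+ ℕ where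
  toFun s := hdeg s v
  map_zero' := rfl
  map_add' s t := hdeg_add s t v

private lemma circuit_deg_even {n : ℕ} (L : ℕ) (w : ℕ → Fin n) (hcl : w L = w 0) (v : Fin n) :
    Even (ldeg ((Multiset.range L).map (fun j => stepEdge (w j) (w (j+1)))) v
        + hdeg ((Multiset.range L).map (fun j => stepEdge (w j) (w (j+1)))) v) := by
  have h1 : ldeg ((Multiset.range L).map (fun j => stepEdge (w j) (w (j+1)))) v
      = Multiset.countP (fun j => (stepEdge (w j) (w (j+1))).2 = v) (Multiset.range L) := by
    rw [ldeg, ← Multiset.countP_eq_card_filter, Multiset.countP_map,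
      Multiset.countP_eq_card_filter]
  have h2 : hdeg ((Multiset.range L).map (fun j => stepEdge (w j) (w (j+1)))) v
      = Multiset.countP (fun j => (stepEdge (w j) (w (j+1))).1 = v) (Multiset.range L) := by
    rw [hdeg, ← Multiset.countP_eq_card_filter, Multiset.countP_map,
      Multiset.countP_eq_card_filter]
  rw [h1, h2, countP_eq_sum', countP_eq_sum', ← Multiset.sum_map_add]
  have hmc : (Multiset.range L).map
        (fun j => ((if (stepEdge (w j) (w (j+1))).2 = v then 1 else 0)
          + (if (stepEdge (w j) (w (j+1))).1 = v then 1 else 0) : ℕ))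
      = (Multiset.range L).map
        (fun j => ((if w j = v then 1 else 0) + (if w (j+1) = v then 1 else 0) : ℕ)) :=
    Multiset.map_congr rfl (fun j _ => stepEdge_deg (w j) (w (j+1)) v)
  rw [hmc, Multiset.sum_map_add, ← countP_eq_sum', ← countP_eq_sum']
  have hsh := countP_range_shift (fun j => w j = v) L
    (by show w 0 = v ↔ w L = v; rw [hcl])
  rw [← hsh]
  exact ⟨_, rfl⟩

private lemma altPartition_of_even {n : ℕ} : ∀ N : ℕ, ∀ E : Multiset (Fin n × Fin n),
    Multiset.card E ≤ N → (∀ e ∈ E, e.1 < e.2) →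
    (∀ u, Even (ldeg E u)) → (∀ u, Even (hdeg E u)) → AltPartition E := by
  intro N
  induction N with
  | zero =>
      intro E hc _ _ _
      have h0 : E = 0 := by rw [← Multiset.card_eq_zero]; omega
      exact ⟨0, Fin.elim0, by simp [h0]⟩
  | succ N ih =>
      intro E hc hE hl hh
      by_cases h0 : E = 0
      · exact ⟨0, Fin.elim0, by simp [h0]⟩
      · obtain ⟨C, hCle⟩ := exists_altCycle E h0 hE hl hh
        have hcardC : 0 < Multiset.card C.edges := by
          rw [AltCycle.edges, Multiset.card_add, AltCycle.upEdges, Multiset.card_map,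
            Multiset.card_range]
          have := C.pos
          omega
        have hc' : Multiset.card (E - C.edges) ≤ N := by
          rw [Multiset.card_sub hCle]
          have h1 : Multiset.card C.edges ≤ Multiset.card E := Multiset.card_le_card hCle
          omega
        have hE' : ∀ e ∈ E - C.edges, e.1 < e.2 :=
          fun e he => hE e (Multiset.mem_of_le tsub_le_self he)
        have hl' : ∀ u, Even (ldeg (E - C.edges) u) := by
          intro u
          rw [ldeg_sub hCle, Nat.even_sub (ldeg_le hCle u)]
          exact iff_of_true (hl u) (cycle_ldeg_even C u)
        have hh' : ∀ u, Even (hdeg (E - C.edges) u) := by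
          intro u
          rw [hdeg_sub hCle, Nat.even_sub (hdeg_le hCle u)]
          exact iff_of_true (hh u) (cycle_hdeg_even C u)
        obtain ⟨k, Cs, hsum⟩ := ih (E - C.edges) hc' hE' hl' hh'
        refine ⟨k + 1, Fin.cons C Cs, ?_⟩
        rw [Fin.sum_univ_succ]
        simp only [Fin.cons_zero, Fin.cons_succ]
        rw [← hsum]
        exact (add_tsub_cancel_of_le hCle).symm

/-- A vertical multigraph whose edges can be partitioned into cycles
(closed trails) but not into alternating cycles has a vertex with odd `ldeg`
(equivalently odd `hdeg`). -/
theorem no_altPartition_odd_ldeg {n : ℕ} (E : Multiset (Fin n × Fin n))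
    (hE : ∀ e ∈ E, e.1 < e.2)
    (hcyc : CircuitPartition E) (halt : ¬ AltPartition E) :
    ∃ v : Fin n, Odd (ldeg E v) ∧ Odd (hdeg E v) := by
  by_contra hcon
  push_neg at hcon
  apply halt
  obtain ⟨k, len, w, hpos, hcl, hne, hsum⟩ := hcyc
  have hdegE : ∀ v, Even (ldeg E v + hdeg E v) := by
    intro v
    rw [← hsum]
    have hl : ldeg (∑ i, (Multiset.range (len i)).map
          (fun j => stepEdge (w i j) (w i (j + 1)))) v
        = ∑ i, ldeg ((Multiset.range (len i)).map
          (fun j => stepEdge (w i j) (w i (j + 1)))) v :=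
      map_sum (ldegHom v) _ Finset.univ
    have hh : hdeg (∑ i, (Multiset.range (len i)).map
          (fun j => stepEdge (w i j) (w i (j + 1)))) v
        = ∑ i, hdeg ((Multiset.range (len i)).map
          (fun j => stepEdge (w i j) (w i (j + 1)))) v :=
      map_sum (hdegHom v) _ Finset.univ
    rw [hl, hh, ← Finset.sum_add_distrib]
    exact Finset.even_sum _ (fun i _ => circuit_deg_even (len i) (w i) (hcl i) v)
  have hlev : ∀ v, Even (ldeg E v) := by
    intro v
    by_contra hodd
    rw [Nat.not_even_iff_odd] at hodd
    have hhodd : Odd (hdeg E v) := by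
      have h := hdegE v
      rw [Nat.even_add] at h
      rw [← Nat.not_even_iff_odd]
      intro he
      exact (Nat.not_even_iff_odd.mpr hodd) (h.mpr he)
    exact hcon v hodd hhodd
  have hhev : ∀ v, Even (hdeg E v) := by
    intro v
    have h := hdegE v
    rw [Nat.even_add] at h
    exact h.mp (hlev v)
  exact altPartition_of_even (Multiset.card E) E le_rfl hE hlev hhev
end

section
/- Let (G_1, G_2) be a pair of vertical graphs on a common collinear vertex set whose verbose diagrams agree in both the up and the down directions, and let C be an alternating cycle in a fixed partition of G_1 ⊔ G_2 into alternating cycles. Form G_1' = G_1 ⊔ C_up and G_2' = G_2 ⊔ C_down where C_up, C_down are the up- and down-edges of an extra copy of C (creating multi-edges). Then the up-direction changes to the verbose diagram data are identical for G_1' and G_2': for every vertex v, the number of new edges with upper endpoint v added to G_1' equals the number added to G_2', and no new 0-dimensional connectivity merges occur (every new edge is parallel to an existing edge, hence creates a 1-cycle). -/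
lemma death0_add_dup {n : ℕ} (E S : Multiset (Fin n × Fin n)) (hS : ∀ e ∈ S, e ∈ E)
    (v : Fin n) : death0 (E + S) v = death0 E v := by
  unfold death0
  have hmem : ∀ j' (e : Fin n × Fin n), e ∈ levelEdges (E + S) j' ↔ e ∈ levelEdges E j' := by
    intro j' e
    simp only [levelEdges, Multiset.mem_filter, Multiset.mem_add]
    constructor
    · rintro ⟨h1 | h1, h2⟩
      · exact ⟨h1, h2⟩
      · exact ⟨hS _ h1, h2⟩
    · rintro ⟨h1, h2⟩; exact ⟨Or.inl h1, h2⟩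
  have hre : ∀ j' a b, Reach (levelEdges (E + S) j') a b ↔ Reach (levelEdges E j') a b := by
    intro j' a b
    unfold Reach
    have : (fun x y => (x, y) ∈ levelEdges (E + S) j' ∨ (y, x) ∈ levelEdges (E + S) j')
         = (fun x y => (x, y) ∈ levelEdges E j' ∨ (y, x) ∈ levelEdges E j') := by
      funext x y
      exact propext (or_congr (hmem _ _) (hmem _ _))
    rw [this]
  have hset : {j : ℕ | ∃ u, u < v ∧ Reach (levelEdges (E + S) j) u v}
      = {j : ℕ | ∃ u, u < v ∧ Reach (levelEdges E j) u v} :=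
    Set.ext fun j => exists_congr fun u => and_congr_right fun _ => hre j u v
  rw [hset]

/-- Let `(G₁, G₂)` have equal VPHT and let the disjoint union be
partitioned into alternating cycles, `G₁` holding the up-edges and `G₂` the
down-edges. Adding an extra copy of one cycle `C` (its up-edges to `G₁`, its
down-edges to `G₂`) changes the up-direction diagram data identically: each vertex
is the upper endpoint of equally many new edges on both sides, every new edge is
parallel to an existing one, and no 0-dimensional connectivity merges occur. -/
theorem add_cycle_copy_identical_changes {n : ℕ} (E1 E2 : Finset (Fin n × Fin n))
    (h1 : ∀ e ∈ E1, e.1 < e.2) (h2 : ∀ e ∈ E2, e.1 < e.2)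
    (hV : VPHTEq E1.val E2.val)
    (k : ℕ) (Cs : Fin k → AltCycle n)
    (hp1 : E1.val = ∑ i, (Cs i).upEdges) (hp2 : E2.val = ∑ i, (Cs i).downEdges)
    (i0 : Fin k) :
    (∀ v : Fin n, ldeg (Cs i0).upEdges v = ldeg (Cs i0).downEdges v) ∧
    (∀ e ∈ (Cs i0).upEdges, e ∈ E1.val) ∧
    (∀ e ∈ (Cs i0).downEdges, e ∈ E2.val) ∧
    (∀ v : Fin n,
      death0 (E1.val + (Cs i0).upEdges) v = death0 E1.val v ∧
      death0 (E2.val + (Cs i0).downEdges) v = death0 E2.val v) := by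
  have hup : ∀ e ∈ (Cs i0).upEdges, e ∈ E1.val := by
    intro e he
    rw [hp1]
    exact Multiset.mem_of_le
      (Finset.single_le_sum (fun i _ => bot_le) (Finset.mem_univ i0)) he
  have hdown : ∀ e ∈ (Cs i0).downEdges, e ∈ E2.val := by
    intro e he
    rw [hp2]
    exact Multiset.mem_of_le
      (Finset.single_le_sum (fun i _ => bot_le) (Finset.mem_univ i0)) he
  refine ⟨?_, hup, hdown, fun v =>
    ⟨death0_add_dup _ _ hup v, death0_add_dup _ _ hdown v⟩⟩
  intro v
  simp only [ldeg, AltCycle.upEdges, AltCycle.downEdges, Multiset.filter_map,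
    Multiset.card_map, Function.comp_def]
end
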